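/- arXiv:1601.00809 — 2 statements merged into one kernel-verified Lean document; each statement's English description precedes it below -/
import Mathlib

section
/- Let (K, K^∨) be a pair of dual reflexive Gorenstein cones of index k with deg^∨ = t_1 + ⋯ + t_k where each t_i ∈ K^∨_(1). Then for each i ∈ {1, …, k} there exists a lattice point m ∈ K with ⟨m, t_j⟩ = δ_{ij} for all 1 ≤ j ≤ k (in particular ⟨m, deg^∨⟩ = 1, so the set K_(1),i = {x ∈ K_(1) : ⟨x, t_j⟩ = δ_{ij} for all j} is nonempty). -/
open scoped BigOperators Pointwise

noncomputable section

/-- The standard pairing `⟨x, y⟩ = ∑ i, x i * y i` on `ℝ^d`. -/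
def pairR {d : ℕ} (x y : Fin d → ℝ) : ℝ := ∑ i, x i * y i

/-- A point of `ℝ^d` is a lattice point if all of its coordinates are integers. -/
def IsLatticePoint {d : ℕ} (x : Fin d → ℝ) : Prop := ∀ i, ∃ z : ℤ, x i = (z : ℝ)

/-- The dual cone `K^∨ = {y : ⟨x, y⟩ ≥ 0 for all x ∈ K}`. -/
def dualCone {d : ℕ} (K : Set (Fin d → ℝ)) : Set (Fin d → ℝ) :=
  { y | ∀ x ∈ K, 0 ≤ pairR x y }

/-- A Gorenstein cone with degree element `n` (a lattice point): the set of all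
nonnegative real linear combinations of a finite set of lattice points, each pairing
to `1` with `n`, such that `K ∩ (−K) = {0}` and `span K = ℝ^d`. -/
def IsGorensteinCone {d : ℕ} (K : Set (Fin d → ℝ)) (n : Fin d → ℝ) : Prop :=
  IsLatticePoint n ∧
  (∃ S : Finset (Fin d → ℝ),
      (∀ v ∈ S, IsLatticePoint v ∧ pairR v n = 1) ∧
      K = { x | ∃ c : (Fin d → ℝ) → ℝ, (∀ v, 0 ≤ c v) ∧ x = ∑ v ∈ S, c v • v }) ∧
  K ∩ (-K) = {0} ∧
  Submodule.span ℝ K = ⊤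

/-- `K_(1)`: the lattice points `m ∈ K` with `⟨m, deg^∨⟩ = 1`. -/
def Kone {d : ℕ} (K : Set (Fin d → ℝ)) (degVee : Fin d → ℝ) : Set (Fin d → ℝ) :=
  { m | IsLatticePoint m ∧ m ∈ K ∧ pairR m degVee = 1 }

/-- `K^∨_(1)`: the lattice points `n ∈ K^∨` with `⟨deg, n⟩ = 1`. -/
def KvOne {d : ℕ} (K : Set (Fin d → ℝ)) (deg : Fin d → ℝ) : Set (Fin d → ℝ) :=
  { n | IsLatticePoint n ∧ n ∈ dualCone K ∧ pairR deg n = 1 }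

lemma pairR_sum_left {d : ℕ} (S : Finset (Fin d → ℝ)) (c : (Fin d → ℝ) → ℝ)
    (y : Fin d → ℝ) : pairR (∑ v ∈ S, c v • v) y = ∑ v ∈ S, c v * pairR v y := by
  simp only [pairR, Finset.sum_apply, Pi.smul_apply, smul_eq_mul, Finset.sum_mul,
    Finset.mul_sum, mul_assoc]
  exact Finset.sum_comm

lemma pairR_sum_right {d k : ℕ} (x : Fin d → ℝ) (t : Fin k → (Fin d → ℝ)) :
    pairR x (∑ j, t j) = ∑ j, pairR x (t j) := by
  simp only [pairR, Finset.sum_apply, Finset.mul_sum]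
  exact Finset.sum_comm

lemma pairR_neg_right {d : ℕ} (x y : Fin d → ℝ) : pairR x (-y) = -pairR x y := by
  simp [pairR]

lemma pair_int {d : ℕ} (x y : Fin d → ℝ) (hx : IsLatticePoint x)
    (hy : IsLatticePoint y) : ∃ z : ℤ, pairR x y = (z : ℝ) := by
  choose a ha using hx
  choose b hb using hy
  refine ⟨∑ i, a i * b i, ?_⟩
  simp [pairR, ha, hb]

/-- With `deg^∨ = t_1 + ⋯ + t_k`, `t_i ∈ K^∨_(1)`, for each `i` there is a
lattice point `m ∈ K` with `⟨m, t_j⟩ = δ_{ij}` for all `j`; in particular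
`⟨m, deg^∨⟩ = 1`, so the set `K_(1),i` is nonempty. -/
theorem stmt2 {d k : ℕ} (K : Set (Fin d → ℝ)) (deg degVee : Fin d → ℝ)
    (hK : IsGorensteinCone K degVee) (hKv : IsGorensteinCone (dualCone K) deg)
    (hk : pairR deg degVee = (k : ℝ))
    (t : Fin k → (Fin d → ℝ)) (ht : ∀ i, t i ∈ KvOne K deg)
    (hdec : degVee = ∑ i, t i) :
    ∀ i : Fin k, (∃ m : Fin d → ℝ, IsLatticePoint m ∧ m ∈ K ∧
        ∀ j, pairR m (t j) = if i = j then 1 else 0) ∧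
      { x | x ∈ Kone K degVee ∧ ∀ j, pairR x (t j) = if i = j then 1 else 0 }.Nonempty := by
  classical
  intro i
  obtain ⟨hnlat, ⟨S, hS, hKeq⟩, hpoint, hspan⟩ := hK
  -- generators lie in K
  have hgen : ∀ v ∈ S, v ∈ K := by
    intro v hv
    rw [hKeq]
    refine ⟨fun w => if w = v then 1 else 0, fun w => by by_cases h : w = v <;> simp [h], ?_⟩
    rw [Finset.sum_eq_single_of_mem v hv]
    · simp
    · intro b _ hb; simp [hb]
  -- t i is nonzero on some generator
  have hex : ∃ v ∈ S, 0 < pairR v (t i) := by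
    by_contra h
    push_neg at h
    have hzero : ∀ x ∈ K, pairR x (t i) = 0 := by
      intro x hx
      rw [hKeq] at hx
      obtain ⟨c, hc, rfl⟩ := hx
      rw [pairR_sum_left]
      refine Finset.sum_eq_zero fun v hv => ?_
      have h1 : pairR v (t i) ≤ 0 := h v hv
      have h2 : 0 ≤ pairR v (t i) := (ht i).2.1 v (hgen v hv)
      rw [le_antisymm h1 h2, mul_zero]
    have h2 : -(t i) ∈ dualCone K := by
      intro x hx
      rw [pairR_neg_right, hzero x hx]
      norm_num
    have hmem : t i ∈ dualCone K ∩ (-(dualCone K)) :=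
      ⟨(ht i).2.1, by simpa [Set.mem_neg] using h2⟩
    rw [hKv.2.2.1] at hmem
    have h3 := (ht i).2.2
    rw [Set.mem_singleton_iff.mp hmem] at h3
    simp [pairR] at h3
  obtain ⟨v, hvS, hvpos⟩ := hex
  have hvK := hgen v hvS
  have hvlat := (hS v hvS).1
  have hvdeg := (hS v hvS).2
  have hsum : ∑ j, pairR v (t j) = 1 := by
    rw [← pairR_sum_right, ← hdec, hvdeg]
  have hnonneg : ∀ j, 0 ≤ pairR v (t j) := fun j => (ht j).2.1 v hvK
  obtain ⟨z, hz⟩ := pair_int v (t i) hvlat (ht i).1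
  have hz1 : (1 : ℝ) ≤ pairR v (t i) := by
    have hz0 : 0 < z := by exact_mod_cast hz ▸ hvpos
    rw [hz]; exact_mod_cast hz0
  have hsplit : pairR v (t i) + ∑ j ∈ Finset.univ.erase i, pairR v (t j) = 1 :=
    (Finset.add_sum_erase Finset.univ (fun j => pairR v (t j)) (Finset.mem_univ i)).trans hsum
  have hrest_nonneg : 0 ≤ ∑ j ∈ Finset.univ.erase i, pairR v (t j) :=
    Finset.sum_nonneg fun j _ => hnonneg j
  have hrest0 : ∑ j ∈ Finset.univ.erase i, pairR v (t j) = 0 := by linarith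
  have hi1 : pairR v (t i) = 1 := by linarith
  have hjzero : ∀ j ∈ Finset.univ.erase i, pairR v (t j) = 0 :=
    (Finset.sum_eq_zero_iff_of_nonneg fun j _ => hnonneg j).mp hrest0
  have key : ∀ j, pairR v (t j) = if i = j then 1 else 0 := by
    intro j
    by_cases hij : i = j
    · subst hij; simp [hi1]
    · simp only [hij, if_false]
      exact hjzero j (Finset.mem_erase.mpr ⟨Ne.symm hij, Finset.mem_univ j⟩)
  exact ⟨⟨v, hvlat, hvK, key⟩, ⟨v, ⟨hvlat, hvK, hvdeg⟩, key⟩⟩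
end
end

section
/- Let (K, K^∨) be a pair of dual reflexive Gorenstein cones of index k with deg^∨ = t_1 + ⋯ + t_k where each t_i ∈ K^∨_(1), and set Δ^∨ = {y ∈ K^∨ : ⟨deg, y⟩ = 1}. If q ∈ Δ^∨ and there exist real numbers α_1, …, α_k such that q + α_1 t_1 + ⋯ + α_k t_k is a lattice point, then there exists a lattice point q' ∈ Δ^∨ such that q' − q lies in the real span of {t_1, …, t_k}. -/
open scoped BigOperators Pointwise

noncomputable section

section Aux
variable {d : ℕ}

lemma pairR_comm (x y : Fin d → ℝ) : pairR x y = pairR y x := by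
  simp [pairR, mul_comm]

lemma pairR_add_right (x y z : Fin d → ℝ) : pairR x (y + z) = pairR x y + pairR x z := by
  simp [pairR, mul_add, Finset.sum_add_distrib]

lemma pairR_sub_right (x y z : Fin d → ℝ) : pairR x (y - z) = pairR x y - pairR x z := by
  simp [pairR, mul_sub, Finset.sum_sub_distrib]

lemma pairR_smul_right (c : ℝ) (x y : Fin d → ℝ) : pairR x (c • y) = c * pairR x y := by
  simp only [pairR, Pi.smul_apply, smul_eq_mul, Finset.mul_sum]
  exact Finset.sum_congr rfl fun i _ => by ring

lemma pairR_sum_right_s4 {ι : Type*} (s : Finset ι) (x : Fin d → ℝ) (f : ι → Fin d → ℝ) :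
    pairR x (∑ i ∈ s, f i) = ∑ i ∈ s, pairR x (f i) := by
  simp only [pairR, Finset.sum_apply, Finset.mul_sum]
  exact Finset.sum_comm

lemma latticePoint_int_pair {x y : Fin d → ℝ} (hx : IsLatticePoint x) (hy : IsLatticePoint y) :
    ∃ m : ℤ, pairR x y = m := by
  choose zx hzx using hx
  choose zy hzy using hy
  refine ⟨∑ i, zx i * zy i, ?_⟩
  simp only [pairR, hzx, hzy]
  push_cast
  rfl

lemma lat_add {x y : Fin d → ℝ} (hx : IsLatticePoint x) (hy : IsLatticePoint y) :
    IsLatticePoint (x + y) := fun i => by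
  obtain ⟨a, ha⟩ := hx i; obtain ⟨b, hb⟩ := hy i
  exact ⟨a + b, by simp [ha, hb]⟩

lemma lat_sub {x y : Fin d → ℝ} (hx : IsLatticePoint x) (hy : IsLatticePoint y) :
    IsLatticePoint (x - y) := fun i => by
  obtain ⟨a, ha⟩ := hx i; obtain ⟨b, hb⟩ := hy i
  exact ⟨a - b, by simp [ha, hb]⟩

lemma lat_zsmul (m : ℤ) {x : Fin d → ℝ} (hx : IsLatticePoint x) :
    IsLatticePoint ((m : ℝ) • x) := fun i => by
  obtain ⟨a, ha⟩ := hx i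
  exact ⟨m * a, by simp [ha]⟩

lemma lat_sum {ι : Type*} (s : Finset ι) (f : ι → Fin d → ℝ)
    (h : ∀ i ∈ s, IsLatticePoint (f i)) : IsLatticePoint (∑ i ∈ s, f i) := by
  classical
  induction s using Finset.induction with
  | empty => exact fun i => ⟨0, by simp⟩
  | @insert a s hns ih =>
    rw [Finset.sum_insert hns]
    exact lat_add (h a (Finset.mem_insert_self a s))
      (ih fun i hi => h i (Finset.mem_insert_of_mem hi))

end Aux

/-- With `deg^∨ = t_1 + ⋯ + t_k`, `t_i ∈ K^∨_(1)`, and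
`Δ^∨ = {y ∈ K^∨ : ⟨deg, y⟩ = 1}`: if `q ∈ Δ^∨` and `q + α_1 t_1 + ⋯ + α_k t_k` is a
lattice point for some reals `α_i`, then there is a lattice point `q' ∈ Δ^∨` with
`q' − q` in the real span of the `t_i`. -/
theorem stmt4 {d k : ℕ} (K : Set (Fin d → ℝ)) (deg degVee : Fin d → ℝ)
    (hK : IsGorensteinCone K degVee) (hKv : IsGorensteinCone (dualCone K) deg)
    (hk : pairR deg degVee = (k : ℝ))
    (t : Fin k → (Fin d → ℝ)) (ht : ∀ i, t i ∈ KvOne K deg)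
    (hdec : degVee = ∑ i, t i)
    (q : Fin d → ℝ) (hq : q ∈ dualCone K ∧ pairR deg q = 1)
    (hlat : ∃ α : Fin k → ℝ, IsLatticePoint (q + ∑ i, α i • t i)) :
    ∃ q' : Fin d → ℝ, IsLatticePoint q' ∧ q' ∈ dualCone K ∧ pairR deg q' = 1 ∧
      q' - q ∈ Submodule.span ℝ (Set.range t) := by
  classical
  obtain ⟨hdegVlat, ⟨S, hSprop, hKeq⟩, -, -⟩ := hK
  obtain ⟨hdeglat, -, -, -⟩ := hKv
  obtain ⟨α, hplat⟩ := hlat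
  have ht' : ∀ i, IsLatticePoint (t i) ∧ t i ∈ dualCone K ∧ pairR deg (t i) = 1 := ht
  set β : Fin k → ℝ := fun i => Int.fract (α i) with hβdef
  have hβ0 : ∀ i, 0 ≤ β i := fun i => Int.fract_nonneg _
  have hβ1 : ∀ i, β i < 1 := fun i => Int.fract_lt_one _
  -- p' = q + ∑ β i • t i is a lattice point
  have hp'eq : q + ∑ i, β i • t i
      = (q + ∑ i, α i • t i) - ∑ i, ((⌊α i⌋ : ℝ) • t i) := by
    have : ∀ i ∈ Finset.univ, β i • t i = α i • t i - (⌊α i⌋ : ℝ) • t i := by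
      intro i _
      rw [hβdef]
      show (α i - ⌊α i⌋) • t i = _
      rw [sub_smul]
    rw [Finset.sum_congr rfl this, Finset.sum_sub_distrib]
    abel
  have hp'lat : IsLatticePoint (q + ∑ i, β i • t i) := by
    rw [hp'eq]
    exact lat_sub hplat (lat_sum _ _ fun i _ => lat_zsmul _ (ht' i).1)
  -- the sum of the β i is a nonnegative integer
  have hpairdegp' : pairR deg (q + ∑ i, β i • t i) = 1 + ∑ i, β i := by
    rw [pairR_add_right, pairR_sum_right_s4, hq.2]
    congr 1
    exact Finset.sum_congr rfl fun i _ => by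
      rw [pairR_smul_right, (ht' i).2.2, mul_one]
  obtain ⟨m, hm⟩ : ∃ m : ℤ, ∑ i, β i = (m : ℝ) := by
    obtain ⟨m, hm⟩ := latticePoint_int_pair hdeglat hp'lat
    exact ⟨m - 1, by rw [hpairdegp'] at hm; push_cast; linarith⟩
  -- choose I ⊆ {i | 0 < β i} with card I = ∑ β i
  obtain ⟨I, hIpos, hIcard⟩ : ∃ I : Finset (Fin k),
      (∀ i ∈ I, 0 < β i) ∧ (I.card : ℝ) = ∑ i, β i := by
    by_cases h0 : ∑ i, β i = 0
    · exact ⟨∅, by simp, by simp [h0]⟩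
    · set P : Finset (Fin k) := Finset.univ.filter (fun i => 0 < β i) with hPdef
      have hPsum : ∑ i ∈ P, β i = ∑ i, β i := by
        refine Finset.sum_filter_of_ne fun i _ hne => ?_
        exact lt_of_le_of_ne (hβ0 i) (Ne.symm hne)
      have hPne : P.Nonempty := by
        rcases Finset.eq_empty_or_nonempty P with h | h
        · exact absurd (by rw [← hPsum, h, Finset.sum_empty]) h0
        · exact h
      have hlt : ∑ i ∈ P, β i < ∑ i ∈ P, (1 : ℝ) :=
        Finset.sum_lt_sum_of_nonempty hPne fun i _ => hβ1 i
      have hmlt : (m : ℝ) < (P.card : ℝ) := by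
        rw [← hm, ← hPsum]
        simpa using hlt
      have hm0 : 0 ≤ m := by
        have : (0:ℝ) ≤ (m:ℝ) := hm ▸ Finset.sum_nonneg fun i _ => hβ0 i
        exact_mod_cast this
      have hcard : m.toNat ≤ P.card := by
        have h1 : ((m.toNat : ℤ) : ℝ) < (P.card : ℝ) := by
          rw [Int.toNat_of_nonneg hm0]; exact hmlt
        exact_mod_cast h1.le
      obtain ⟨I, hIsub, hIcard⟩ := Finset.exists_subset_card_eq hcard
      refine ⟨I, fun i hi => (Finset.mem_filter.mp (hIsub hi)).2, ?_⟩
      rw [hIcard, hm]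
      have h2 : ((m.toNat : ℤ) : ℝ) = (m : ℝ) := by rw [Int.toNat_of_nonneg hm0]
      exact_mod_cast h2
  -- the candidate point
  set q' : Fin d → ℝ := q + ∑ i, β i • t i - ∑ i ∈ I, t i with hq'def
  have hq'lat : IsLatticePoint q' :=
    lat_sub hp'lat (lat_sum _ _ fun i _ => (ht' i).1)
  -- membership of each generator in K
  have hvK : ∀ v ∈ S, v ∈ K := by
    intro v hv
    rw [hKeq]
    refine ⟨fun u => if u = v then 1 else 0, fun u => by positivity, ?_⟩
    rw [Finset.sum_eq_single_of_mem v hv (fun u _ hu => by simp [hu])]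
    simp
  -- value of pairR v q' for v ∈ S
  have hq'pair : ∀ v, pairR v q'
      = pairR v q + ∑ i, β i * pairR v (t i) - ∑ i ∈ I, pairR v (t i) := by
    intro v
    rw [hq'def, pairR_sub_right, pairR_add_right, pairR_sum_right_s4, pairR_sum_right_s4]
    congr 2
    exact Finset.sum_congr rfl fun i _ => pairR_smul_right _ _ _
  have hkey : ∀ v ∈ S, 0 ≤ pairR v q' := by
    intro v hv
    obtain ⟨hvlat, hvdeg⟩ := hSprop v hv
    have hn0 : ∀ i, 0 ≤ pairR v (t i) := fun i => (ht' i).2.1 v (hvK v hv)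
    have hnsum : ∑ i, pairR v (t i) = 1 := by
      rw [← pairR_sum_right_s4, ← hdec, hvdeg]
    by_cases hz : ∀ i ∈ I, pairR v (t i) = 0
    · rw [hq'pair v, Finset.sum_eq_zero hz, sub_zero]
      have h1 : 0 ≤ pairR v q := hq.1 v (hvK v hv)
      have h2 : 0 ≤ ∑ i, β i * pairR v (t i) :=
        Finset.sum_nonneg fun i _ => mul_nonneg (hβ0 i) (hn0 i)
      linarith
    · push_neg at hz
      obtain ⟨i0, hi0I, hi0ne⟩ := hz
      -- pairR v (t i0) is a positive integer, hence ≥ 1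
      have hn1 : 1 ≤ pairR v (t i0) := by
        obtain ⟨n, hn⟩ := latticePoint_int_pair hvlat (ht' i0).1
        have : 0 < n := by
          rcases lt_or_eq_of_le ((by exact_mod_cast hn ▸ hn0 i0 : (0:ℤ) ≤ n)) with h | h
          · exact h
          · exact absurd (hn.trans (by exact_mod_cast h.symm)) hi0ne
        rw [hn]; exact_mod_cast this
      have hIle : ∑ i ∈ I, pairR v (t i) ≤ 1 := by
        rw [← hnsum]
        exact Finset.sum_le_sum_of_subset_of_nonneg (Finset.subset_univ I)
          (fun i _ _ => hn0 i)
      have hβsum : β i0 ≤ ∑ i, β i * pairR v (t i) := by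
        calc β i0 = β i0 * 1 := (mul_one _).symm
          _ ≤ β i0 * pairR v (t i0) := by
              exact mul_le_mul_of_nonneg_left hn1 (hβ0 i0)
          _ ≤ ∑ i, β i * pairR v (t i) :=
              Finset.single_le_sum (fun i _ => mul_nonneg (hβ0 i) (hn0 i))
                (Finset.mem_univ i0)
      have hgt : -1 < pairR v q' := by
        rw [hq'pair v]
        have h1 : 0 ≤ pairR v q := hq.1 v (hvK v hv)
        have h2 : 0 < β i0 := hIpos i0 hi0I
        linarith
      obtain ⟨M, hM⟩ := latticePoint_int_pair hvlat hq'lat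
      rw [hM] at hgt ⊢
      have h3 : (-1:ℤ) < M := by exact_mod_cast hgt
      exact_mod_cast (by omega : (0:ℤ) ≤ M)
  refine ⟨q', hq'lat, ?_, ?_, ?_⟩
  · -- q' ∈ dualCone K
    intro x hx
    rw [hKeq] at hx
    obtain ⟨c, hc0, rfl⟩ := hx
    rw [pairR_comm, pairR_sum_right_s4]
    refine Finset.sum_nonneg fun v hv => ?_
    rw [pairR_smul_right]
    exact mul_nonneg (hc0 v) (by rw [pairR_comm]; exact hkey v hv)
  · -- pairR deg q' = 1
    rw [hq'def, pairR_sub_right, hpairdegp', pairR_sum_right_s4]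
    rw [Finset.sum_congr rfl fun i (_ : i ∈ I) => (ht' i).2.2]
    simp [← hIcard]
  · -- span condition
    have : q' - q = ∑ i, β i • t i - ∑ i ∈ I, t i := by
      rw [hq'def]; abel
    rw [this]
    refine Submodule.sub_mem _ ?_ ?_
    · exact Submodule.sum_mem _ fun i _ =>
        Submodule.smul_mem _ _ (Submodule.subset_span ⟨i, rfl⟩)
    · exact Submodule.sum_mem _ fun i _ => Submodule.subset_span ⟨i, rfl⟩
end
end
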